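/- Let σ ∈ S_{n−1} with w_σ ≠ 0. Every γ ∈ C_σ can be written uniquely as γ = ∑_{i=1}^n t_i f_{i,σ} + ∑_{i=1}^n m_i f_{i,σ} with t_i ∈ I_{i,σ} and m_i ∈ ℤ_{≥0}, and conversely every such choice of t_i ∈ I_{i,σ} and m_i ∈ ℤ_{≥0} yields an element of C_σ. Moreover, if γ ∈ C_σ also lies in k (under the embedding k ↪ ℝ^n) and M is a fractional ideal of k containing the ring of integers O_k, then γ ∈ M if and only if z := ∑_{i=1}^n t_i f_{i,σ} ∈ M. -/
import Mathlib


open scoped Classical NumberField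
open NumberField

noncomputable section

namespace SignedDomain

variable {K : Type*} [Field K] [NumberField K] {n : ℕ}

/-- Embedding of `K` into `ℝ^(n+1)` via the real embeddings `τ`. -/
def emb (τ : Fin (n + 1) → (K →+* ℝ)) (x : K) : Fin (n + 1) → ℝ :=
  fun i => τ i x

/-- The group `E₊` of totally positive units of the ring of integers. -/
def Eplus (τ : Fin (n + 1) → (K →+* ℝ)) : Subgroup (𝓞 K)ˣ where
  carrier := {u | ∀ i, 0 < τ i ((u : 𝓞 K) : K)}
  one_mem' := by intro i; simp
  mul_mem' := by
    intro a b ha hb i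
    have h : ((↑(a * b) : 𝓞 K) : K) = ((↑a : 𝓞 K) : K) * ((↑b : 𝓞 K) : K) := by
      push_cast; ring
    simp only [Set.mem_setOf_eq] at *
    rw [h, map_mul]
    exact mul_pos (ha i) (hb i)
  inv_mem' := by
    intro a ha i
    simp only [Set.mem_setOf_eq] at *
    have h : τ i ((↑(a⁻¹) : 𝓞 K) : K) * τ i ((↑a : 𝓞 K) : K) = 1 := by
      rw [← map_mul]
      have : ((↑(a⁻¹) : 𝓞 K) : K) * ((↑a : 𝓞 K) : K) = 1 := by
        have := a.inv_mul
        calc ((↑(a⁻¹) : 𝓞 K) : K) * ((↑a : 𝓞 K) : K) = ((↑(a⁻¹ * a) : 𝓞 K) : K) := by push_cast; ring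
        _ = 1 := by rw [inv_mul_cancel]; simp
      rw [this, map_one]
    nlinarith [ha i]

/-- The subgroup generated by the chosen units. -/
def V (ε : Fin n → (𝓞 K)ˣ) : Subgroup (𝓞 K)ˣ :=
  Subgroup.closure (Set.range ε)

/-- The vectors `f_{i,σ} = ∏_{j<i} ε_{σ(j)}`, viewed in `ℝ^(n+1)`. -/
def fvec (τ : Fin (n + 1) → (K →+* ℝ)) (ε : Fin n → (𝓞 K)ˣ) (σ : Equiv.Perm (Fin n))
    (i : Fin (n + 1)) : Fin (n + 1) → ℝ :=
  fun l => ∏ j ∈ Finset.univ.filter (fun j : Fin n => (j : ℕ) < (i : ℕ)), τ l ((ε (σ j) : 𝓞 K) : K)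

/-- The matrix with columns `Log ε_i` (first `n` coordinates of the logarithmic embedding). -/
def LogMat (τ : Fin (n + 1) → (K →+* ℝ)) (ε : Fin n → (𝓞 K)ˣ) : Matrix (Fin n) (Fin n) ℝ :=
  Matrix.of fun l i => Real.log (τ (Fin.castSucc l) ((ε i : 𝓞 K) : K))

/-- The matrix with columns `f_{1,σ},…,f_{n+1,σ}`. -/
def Fmat (τ : Fin (n + 1) → (K →+* ℝ)) (ε : Fin n → (𝓞 K)ˣ) (σ : Equiv.Perm (Fin n)) :
    Matrix (Fin (n + 1)) (Fin (n + 1)) ℝ :=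
  Matrix.of fun l i => fvec τ ε σ i l

/-- The weight `w_σ`. -/
def w (τ : Fin (n + 1) → (K →+* ℝ)) (ε : Fin n → (𝓞 K)ˣ) (σ : Equiv.Perm (Fin n)) : ℝ :=
  ((-1 : ℝ) ^ n * ((Equiv.Perm.sign σ : ℤ) : ℝ) * Real.sign (Fmat τ ε σ).det) /
    Real.sign (LogMat τ ε).det

/-- The last standard basis vector `e_n` of `ℝ^(n+1)`. -/
def en : Fin (n + 1) → ℝ := fun i => if i = Fin.last n then 1 else 0

/-- `e_n` lies in the open half-space `H_{i,σ}^+` (on the same side as `f_{i,σ}`):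
when the `f_{j,σ}` form a basis this says that the `i`-th coordinate of `e_n`
with respect to this basis is positive. -/
def posSide (τ : Fin (n + 1) → (K →+* ℝ)) (ε : Fin n → (𝓞 K)ˣ) (σ : Equiv.Perm (Fin n))
    (i : Fin (n + 1)) : Prop :=
  ∃ c : Fin (n + 1) → ℝ, (en = ∑ j, c j • fvec τ ε σ j) ∧ 0 < c i

/-- The coefficient range `R_{i,σ}`. -/
def Rset (τ : Fin (n + 1) → (K →+* ℝ)) (ε : Fin n → (𝓞 K)ˣ) (σ : Equiv.Perm (Fin n))
    (i : Fin (n + 1)) : Set ℝ :=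
  if posSide τ ε σ i then Set.Ici 0 else Set.Ioi 0

/-- The (partly open) cone `C_σ`; empty when `w_σ = 0`. -/
def Cone (τ : Fin (n + 1) → (K →+* ℝ)) (ε : Fin n → (𝓞 K)ˣ) (σ : Equiv.Perm (Fin n)) :
    Set (Fin (n + 1) → ℝ) :=
  if w τ ε σ ≠ 0 then
    {x | ∃ c : Fin (n + 1) → ℝ, (∀ i, c i ∈ Rset τ ε σ i) ∧ x = ∑ j, c j • fvec τ ε σ j}
  else ∅

/-- The orbit `V·x` of `x ∈ ℝ^(n+1)` under the componentwise action of `V`. -/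
def orbit (τ : Fin (n + 1) → (K →+* ℝ)) (ε : Fin n → (𝓞 K)ˣ) (x : Fin (n + 1) → ℝ) :
    Set (Fin (n + 1) → ℝ) :=
  {y | ∃ u ∈ V ε, y = emb τ ((u : 𝓞 K) : K) * x}

/-- The positive orthant of `ℝ^m`. -/
def posOrthant (m : ℕ) : Set (Fin m → ℝ) := {x | ∀ i, 0 < x i}

/-- The projection `ℓ(x) = (x₁/xₙ, …, x_{n-1}/xₙ)`. -/
def ell (x : Fin (n + 1) → ℝ) : Fin n → ℝ :=
  fun j => x (Fin.castSucc j) / x (Fin.last n)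

/-- The vertices `φ_{i,σ} = ℓ(f_{i+1,σ})`. -/
def phi (τ : Fin (n + 1) → (K →+* ℝ)) (ε : Fin n → (𝓞 K)ˣ) (σ : Equiv.Perm (Fin n))
    (i : Fin (n + 1)) : Fin n → ℝ :=
  ell (fvec τ ε σ i)

/-- The coefficient range `J_{i,σ}`. -/
def Jset (τ : Fin (n + 1) → (K →+* ℝ)) (ε : Fin n → (𝓞 K)ˣ) (σ : Equiv.Perm (Fin n))
    (i : Fin (n + 1)) : Set ℝ :=
  if posSide τ ε σ i then Set.Icc 0 1 else Set.Ioc 0 1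

/-- The (partly open) simplex `c_σ`; empty when `w_σ = 0`. -/
def simplex (τ : Fin (n + 1) → (K →+* ℝ)) (ε : Fin n → (𝓞 K)ˣ) (σ : Equiv.Perm (Fin n)) :
    Set (Fin n → ℝ) :=
  if w τ ε σ ≠ 0 then
    {y | ∃ b : Fin (n + 1) → ℝ, (∑ i, b i = 1) ∧ (∀ i, b i ∈ Jset τ ε σ i) ∧
      y = ∑ i, b i • phi τ ε σ i}
  else ∅

/-- The orbit `Ṽ·y` of `y ∈ ℝ^n` under the componentwise action of `Ṽ = ℓ(V)`. -/
def torbit (τ : Fin (n + 1) → (K →+* ℝ)) (ε : Fin n → (𝓞 K)ˣ) (y : Fin n → ℝ) :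
    Set (Fin n → ℝ) :=
  {z | ∃ u ∈ V ε, z = ell (emb τ ((u : 𝓞 K) : K)) * y}


/-- The coefficient range `I_{i,σ}`. -/
def Iset {K : Type*} [Field K] [NumberField K] {n : ℕ}
    (τ : Fin (n + 1) → (K →+* ℝ)) (ε : Fin n → (𝓞 K)ˣ) (σ : Equiv.Perm (Fin n))
    (i : Fin (n + 1)) : Set ℝ :=
  if posSide τ ε σ i then Set.Ico 0 1 else Set.Ioc 0 1

private lemma split_Ico {c : ℝ} (hc : 0 ≤ c) :
    ∃ t : ℝ, ∃ m : ℕ, t ∈ Set.Ico (0:ℝ) 1 ∧ c = t + m := by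
  refine ⟨Int.fract c, (⌊c⌋).toNat, ⟨Int.fract_nonneg c, Int.fract_lt_one c⟩, ?_⟩
  have h0 : (0:ℤ) ≤ ⌊c⌋ := Int.floor_nonneg.mpr hc
  have hcast : ((⌊c⌋.toNat : ℕ) : ℝ) = ((⌊c⌋ : ℤ) : ℝ) := by
    exact_mod_cast Int.toNat_of_nonneg h0
  have := Int.fract_add_floor c
  rw [hcast]; linarith

private lemma split_Ioc {c : ℝ} (hc : 0 < c) :
    ∃ t : ℝ, ∃ m : ℕ, t ∈ Set.Ioc (0:ℝ) 1 ∧ c = t + m := by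
  have h1 : (0:ℤ) < ⌈c⌉ := Int.ceil_pos.mpr hc
  have h1' : (0:ℤ) ≤ ⌈c⌉ - 1 := by omega
  have hcast : (((⌈c⌉ - 1).toNat : ℕ) : ℝ) = ((⌈c⌉ - 1 : ℤ) : ℝ) := by
    exact_mod_cast Int.toNat_of_nonneg h1'
  refine ⟨c - ((⌈c⌉:ℝ) - 1), (⌈c⌉ - 1).toNat, ⟨?_, ?_⟩, ?_⟩
  · have := Int.ceil_lt_add_one c; linarith
  · have := Int.le_ceil c; linarith
  · rw [hcast]; push_cast; ring

private lemma nat_unique {t t' : ℝ} {m m' : ℕ} (h : t + m = t' + m')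
    (h1 : |t - t'| < 1) : t = t' ∧ m = m' := by
  have h2 : |((m : ℤ) - (m' : ℤ) : ℤ)| < 1 := by
    have : |((m:ℝ) - (m':ℝ))| < 1 := by
      have : (m:ℝ) - (m':ℝ) = t' - t := by linarith
      rw [this, abs_sub_comm]; exact h1
    exact_mod_cast (by push_cast; exact this : |(((m : ℤ) - (m' : ℤ) : ℤ) : ℝ)| < 1)
  rw [abs_lt] at h2
  have hmm : m = m' := by omega
  subst hmm
  exact ⟨by linarith, rfl⟩

/-- Every element of `C_σ` decomposes uniquely as `∑ tᵢ f_{i,σ} + ∑ mᵢ f_{i,σ}` with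
`tᵢ ∈ I_{i,σ}` and `mᵢ ∈ ℤ_{≥0}`, and conversely; moreover for a fractional ideal `M ⊇ O_k`,
membership of such an element of `k` in `M` depends only on its fractional part `z`. -/
theorem cone_decomposition
    {K : Type*} [Field K] [NumberField K] {n : ℕ} (hn : 1 ≤ n)
    (τ : Fin (n + 1) → (K →+* ℝ)) (hτ : Function.Injective τ)
    (hdeg : Module.finrank ℚ K = n + 1)
    (ε : Fin n → (𝓞 K)ˣ) (hpos : ∀ i, ε i ∈ Eplus τ)
    (σ : Equiv.Perm (Fin n)) (hσ : w τ ε σ ≠ 0) :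
    (∀ γ ∈ Cone τ ε σ, ∃! p : (Fin (n + 1) → ℝ) × (Fin (n + 1) → ℕ),
      (∀ i, p.1 i ∈ Iset τ ε σ i) ∧ γ = ∑ i, (p.1 i + (p.2 i : ℝ)) • fvec τ ε σ i) ∧
    (∀ (t : Fin (n + 1) → ℝ) (m : Fin (n + 1) → ℕ), (∀ i, t i ∈ Iset τ ε σ i) →
      (∑ i, (t i + (m i : ℝ)) • fvec τ ε σ i) ∈ Cone τ ε σ) ∧
    (∀ M : FractionalIdeal (nonZeroDivisors (𝓞 K)) K, 1 ≤ M →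
      ∀ (a z : K) (t : Fin (n + 1) → ℝ) (m : Fin (n + 1) → ℕ),
        (∀ i, t i ∈ Iset τ ε σ i) →
        emb τ a = ∑ i, (t i + (m i : ℝ)) • fvec τ ε σ i →
        emb τ z = ∑ i, t i • fvec τ ε σ i →
        (a ∈ M ↔ z ∈ M)) := by
  classical
  -- The matrix `Fmat` is invertible since `w ≠ 0`.
  have hdet : (Fmat τ ε σ).det ≠ 0 := by
    intro h
    apply hσ
    unfold w
    rw [h, Real.sign_zero]
    simp
  have hmv : Function.Injective (Fmat τ ε σ).mulVec :=
    Matrix.mulVec_injective_iff_isUnit.mpr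
      ((Matrix.isUnit_iff_isUnit_det _).mpr (isUnit_iff_ne_zero.mpr hdet))
  have hsum : ∀ c : Fin (n+1) → ℝ, (∑ i, c i • fvec τ ε σ i) = (Fmat τ ε σ).mulVec c := by
    intro c; funext l
    simp [Matrix.mulVec, dotProduct, Fmat, Finset.sum_apply, mul_comm]
  have hcoef : ∀ c d : Fin (n+1) → ℝ,
      (∑ i, c i • fvec τ ε σ i) = (∑ i, d i • fvec τ ε σ i) → c = d := by
    intro c d h
    exact hmv (by rw [← hsum c, ← hsum d, h])
  -- width of each `Iset`
  have hIwidth : ∀ i, ∀ x ∈ Iset τ ε σ i, ∀ y ∈ Iset τ ε σ i, |x - y| < 1 := by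
    intro i x hx y hy
    rw [Iset] at hx hy
    by_cases hp : posSide τ ε σ i
    · rw [if_pos hp] at hx hy
      rw [abs_lt]; constructor <;> [linarith [hx.1, hy.2]; linarith [hx.2, hy.1]]
    · rw [if_neg hp] at hx hy
      rw [abs_lt]; constructor <;> [linarith [hx.1, hy.2]; linarith [hx.2, hy.1]]
  refine ⟨?_, ?_, ?_⟩
  · -- existence and uniqueness of the decomposition
    intro γ hγ
    rw [Cone, if_pos hσ] at hγ
    obtain ⟨c, hc, rfl⟩ := hγ
    have hsplit : ∀ i, ∃ t : ℝ, ∃ m : ℕ, t ∈ Iset τ ε σ i ∧ c i = t + m := by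
      intro i
      have hci := hc i
      rw [Rset] at hci
      rw [Iset]
      by_cases hp : posSide τ ε σ i
      · rw [if_pos hp] at hci ⊢; exact split_Ico hci
      · rw [if_neg hp] at hci ⊢; exact split_Ioc hci
    choose t m ht hm using hsplit
    refine ⟨(t, m), ⟨ht, Finset.sum_congr rfl fun i _ => by rw [← hm i]⟩, ?_⟩
    rintro ⟨t', m'⟩ ⟨ht', hq⟩
    have hceq : (fun i => t' i + (m' i : ℝ)) = c :=
      hcoef _ _ (by rw [← hq])
    have key : ∀ i, t' i = t i ∧ m' i = m i := by
      intro i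
      have e1 : t' i + (m' i : ℝ) = t i + (m i : ℝ) := by
        have := congrFun hceq i
        rw [this, hm i]
      exact nat_unique e1 (hIwidth i _ (ht' i) _ (ht i))
    exact Prod.ext (funext fun i => (key i).1) (funext fun i => (key i).2)
  · -- converse direction
    intro t m ht
    rw [Cone, if_pos hσ]
    refine ⟨fun i => t i + (m i : ℝ), fun i => ?_, rfl⟩
    have hti := ht i
    rw [Iset] at hti
    rw [Rset]
    by_cases hp : posSide τ ε σ i
    · rw [if_pos hp] at hti ⊢
      exact Set.mem_Ici.mpr (add_nonneg hti.1 (Nat.cast_nonneg _))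
    · rw [if_neg hp] at hti ⊢
      exact Set.mem_Ioi.mpr (add_pos_of_pos_of_nonneg hti.1 (Nat.cast_nonneg _))
  · -- fractional ideal membership
    intro M hM a z t m ht ha hz
    set g : Fin (n+1) → 𝓞 K := fun i =>
      ∏ j ∈ Finset.univ.filter (fun j : Fin n => (j : ℕ) < (i : ℕ)), ((ε (σ j) : 𝓞 K)) with hg
    have hfg : ∀ i l, fvec τ ε σ i l = τ l ((g i : K)) := by
      intro i l
      have : ((g i : 𝓞 K) : K) =
          ∏ j ∈ Finset.univ.filter (fun j : Fin n => (j : ℕ) < (i : ℕ)),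
            ((ε (σ j) : 𝓞 K) : K) := by
        rw [hg]; push_cast; rfl
      rw [fvec, this, map_prod]
    set b : 𝓞 K := ∑ i, (m i : 𝓞 K) * g i with hb
    have hab : a - z = (b : K) := by
      have h0 : τ 0 (a - z) = τ 0 (b : K) := by
        have hbK : ((b : 𝓞 K) : K) = ∑ i, (m i : K) * (g i : K) := by
          rw [hb]; push_cast; rfl
        rw [map_sub, hbK, map_sum]
        have ha0 := congrFun ha 0
        have hz0 := congrFun hz 0
        rw [emb] at ha0 hz0
        simp only [Finset.sum_apply, Pi.smul_apply, smul_eq_mul] at ha0 hz0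
        rw [ha0, hz0, ← Finset.sum_sub_distrib]
        refine Finset.sum_congr rfl fun i _ => ?_
        rw [map_mul, map_natCast, hfg i 0]
        ring
      exact (τ 0).injective h0
    have hbM : (b : K) ∈ M := by
      have hb1 : (b : K) ∈ (1 : FractionalIdeal (nonZeroDivisors (𝓞 K)) K) :=
        (FractionalIdeal.mem_one_iff _).mpr ⟨b, rfl⟩
      exact hM hb1
    constructor
    · intro haM
      have : z = a - (b : K) := by rw [← hab]; ring
      rw [this]
      exact FractionalIdeal.mem_coe.mp
        (Submodule.sub_mem _ (FractionalIdeal.mem_coe.mpr haM) (FractionalIdeal.mem_coe.mpr hbM))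
    · intro hzM
      have : a = z + (b : K) := by rw [← hab]; ring
      rw [this]
      exact FractionalIdeal.mem_coe.mp
        (Submodule.add_mem _ (FractionalIdeal.mem_coe.mpr hzM) (FractionalIdeal.mem_coe.mpr hbM))

end SignedDomain
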